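/- A finite abelian group G is a cut group (i.e. every element is inverse semi-rational) if and only if the exponent of G divides 4 or 6. -/

import Mathlib

/-- A finite group is a *cut group* (inverse semi-rational) if for every element `x`
and every integer `j` coprime to the order of `x`, `x ^ j` is conjugate to `x` or to `x⁻¹`. -/
def IsCutGroup (G : Type*) [Group G] : Prop :=
  ∀ x : G, ∀ j : ℤ, Int.gcd j (orderOf x) = 1 →
    IsConj (x ^ j) x ∨ IsConj (x ^ j) x⁻¹

private lemma not_dvd_of_gcd_eq_one {p n : ℕ} {j : ℤ} (hp : p ∣ n) (hp1 : p ≠ 1)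
    (h : Int.gcd j n = 1) : ¬ (p : ℤ) ∣ j := by
  intro hd
  have h1 : p ∣ j.natAbs := Int.natCast_dvd.mp hd
  have h2 : p ∣ Int.gcd j n := Nat.dvd_gcd h1 hp
  rw [h] at h2
  exact hp1 (Nat.eq_one_of_dvd_one h2)

private lemma key_forward {n : ℕ} (hn : 0 < n)
    (h : ∀ j : ℤ, Int.gcd j n = 1 → (n : ℤ) ∣ j - 1 ∨ (n : ℤ) ∣ j + 1) :
    n ∣ 4 ∨ n ∣ 6 := by
  by_cases h5 : 5 ∣ n
  · exfalso
    have hp5 : Nat.Prime 5 := by norm_num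
    set m : ℕ := ordCompl[5] n with hm
    have hmc : Nat.Coprime m 5 := (Nat.coprime_ordCompl hp5 hn.ne').symm
    obtain ⟨t, -, ht⟩ := Nat.exists_mul_mod_eq_one_of_coprime hmc (by norm_num)
    -- j := 1 + m * t is coprime to n and ≡ 2 mod 5
    have hj5 : (1 + m * t) % 5 = 2 := by omega
    have hcop5 : Nat.Coprime 5 (1 + m * t) := by
      rw [Nat.Prime.coprime_iff_not_dvd hp5]
      omega
    have hcopm : Nat.Coprime (1 + m * t) m := by
      simp [Nat.coprime_add_mul_right_left 1 m t]
    have hncop : Nat.Coprime (1 + m * t) n := by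
      have hsplit : ordProj[5] n * m = n := Nat.ordProj_mul_ordCompl_eq_self n 5
      rw [← hsplit]
      exact Nat.Coprime.mul_right ((hcop5.symm).pow_right _) hcopm
    have hgcd : Int.gcd ((1 + m * t : ℕ) : ℤ) n = 1 := by
      rw [Int.gcd_natCast_natCast]; exact hncop
    rcases h ((1 + m * t : ℕ) : ℤ) hgcd with hd | hd
    · have h5d : (5 : ℤ) ∣ ((1 + m * t : ℕ) : ℤ) - 1 :=
        dvd_trans (Int.natCast_dvd_natCast.mpr h5) hd
      rw [show ((1 + m * t : ℕ) : ℤ) - 1 = ((m * t : ℕ) : ℤ) by push_cast; ring] at h5d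
      have : (5 : ℕ) ∣ m * t := by exact_mod_cast h5d
      omega
    · have h5d : (5 : ℤ) ∣ ((1 + m * t : ℕ) : ℤ) + 1 :=
        dvd_trans (Int.natCast_dvd_natCast.mpr h5) hd
      rw [show ((1 + m * t : ℕ) : ℤ) + 1 = ((2 + m * t : ℕ) : ℤ) by push_cast; ring] at h5d
      have : (5 : ℕ) ∣ 2 + m * t := by exact_mod_cast h5d
      omega
  · have hgcd : Int.gcd (5 : ℤ) n = 1 := by
      have : Nat.Coprime 5 n := by
        rw [Nat.Prime.coprime_iff_not_dvd (by norm_num)]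
        exact h5
      simpa [Int.gcd] using this
    rcases h 5 hgcd with hd | hd
    · left
      have : (n : ℤ) ∣ ((4 : ℕ) : ℤ) := by simpa using hd
      exact_mod_cast this
    · right
      have : (n : ℤ) ∣ ((6 : ℕ) : ℤ) := by simpa using hd
      exact_mod_cast this

private lemma key_backward {n : ℕ} (hd : n ∣ 4 ∨ n ∣ 6) (j : ℤ)
    (hj : Int.gcd j n = 1) : (n : ℤ) ∣ j - 1 ∨ (n : ℤ) ∣ j + 1 := by
  have hn : n = 1 ∨ n = 2 ∨ n = 3 ∨ n = 4 ∨ n = 6 := by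
    rcases hd with hd | hd
    · have h1 : 1 ≤ n := Nat.pos_of_dvd_of_pos hd (by norm_num)
      have h2 : n ≤ 4 := Nat.le_of_dvd (by norm_num) hd
      interval_cases n <;> omega
    · have h1 : 1 ≤ n := Nat.pos_of_dvd_of_pos hd (by norm_num)
      have h2 : n ≤ 6 := Nat.le_of_dvd (by norm_num) hd
      interval_cases n <;> omega
  rcases hn with rfl | rfl | rfl | rfl | rfl
  · left; simp
  · have := not_dvd_of_gcd_eq_one (p := 2) dvd_rfl (by norm_num) hj
    push_cast at this ⊢; omega
  · have := not_dvd_of_gcd_eq_one (p := 3) dvd_rfl (by norm_num) hj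
    push_cast at this ⊢; omega
  · have := not_dvd_of_gcd_eq_one (p := 2) (by norm_num) (by norm_num) hj
    push_cast at this ⊢; omega
  · have h2 := not_dvd_of_gcd_eq_one (p := 2) (by norm_num) (by norm_num) hj
    have h3 := not_dvd_of_gcd_eq_one (p := 3) (by norm_num) (by norm_num) hj
    have e2 : j % 6 % 2 = j % 2 := Int.emod_emod_of_dvd j (by norm_num)
    have e3 : j % 6 % 3 = j % 3 := Int.emod_emod_of_dvd j (by norm_num)
    push_cast at h2 h3 ⊢
    have hm2 : j % 2 = 1 := by omega
    have hm3 : j % 3 = 1 ∨ j % 3 = 2 := by omega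
    have hr : j % 6 = 1 ∨ j % 6 = 5 := by omega
    omega

theorem stmt_1 {G : Type*} [CommGroup G] [Finite G] :
    IsCutGroup G ↔ (Monoid.exponent G ∣ 4 ∨ Monoid.exponent G ∣ 6) := by
  constructor
  · intro h
    obtain ⟨g, hg⟩ := Monoid.exists_orderOf_eq_exponent (Monoid.ExponentExists.of_finite (G := G))
    rw [← hg]
    apply key_forward (orderOf_pos g)
    intro j hj
    rcases h g j hj with hc | hc <;> rw [isConj_iff_eq] at hc
    · left
      have := (orderOf_dvd_sub_iff_zpow_eq_zpow (x := g) (a := j) (b := 1)).mpr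
        (by simpa using hc)
      simpa using this
    · right
      have := (orderOf_dvd_sub_iff_zpow_eq_zpow (x := g) (a := j) (b := -1)).mpr
        (by simpa using hc)
      simpa [sub_neg_eq_add] using this
  · intro h x j hj
    have hd : orderOf x ∣ 4 ∨ orderOf x ∣ 6 := by
      rcases h with h | h
      · exact Or.inl ((Monoid.order_dvd_exponent x).trans h)
      · exact Or.inr ((Monoid.order_dvd_exponent x).trans h)
    rcases key_backward hd j hj with hc | hc
    · left
      rw [isConj_iff_eq]
      have := (orderOf_dvd_sub_iff_zpow_eq_zpow (x := x) (a := j) (b := 1)).mp hc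
      simpa using this
    · right
      rw [isConj_iff_eq]
      have := (orderOf_dvd_sub_iff_zpow_eq_zpow (x := x) (a := j) (b := -1)).mp
        (by simpa [sub_neg_eq_add] using hc)
      simpa using this
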